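/- Forward move F2: If (α_n)_{n≥0}, (β_n)_{n≥0} form a Bailey pair with respect to base a, where a q^m ≠ 1 for all m ≥ 1 and 1 + a q^m ≠ 0 for all m ≥ 0, then the sequences β'_n = Σ_{j=0}^{n} ((−q;q)_j q^{binom(j,2)} a^j / ((q;q)_{n−j} (−a;q)_n)) β_j and α'_n = ((−q;q)_n q^{binom(n,2)} a^n / (−a;q)_n) α_n also form a Bailey pair with respect to base a, where binom(m,2) = m(m−1)/2. -/

import Mathlib

open Finset

noncomputable def qPoch (a q : ℂ) (n : ℕ) : ℂ :=
  ∏ t ∈ Finset.range n, (1 - a * q ^ t)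

noncomputable def qPochInf (a q : ℂ) : ℂ :=
  ∏' t : ℕ, (1 - a * q ^ t)

def IsBaileyPair (q a : ℂ) (α β : ℕ → ℂ) : Prop :=
  ∀ n : ℕ, β n =
    ∑ t ∈ Finset.range (n + 1), α t / (qPoch q q (n - t) * qPoch (a * q) q (n + t))

lemma qPoch_ne_zero {x q : ℂ} (h : ∀ t : ℕ, 1 - x * q ^ t ≠ 0) (n : ℕ) :
    qPoch x q n ≠ 0 :=
  Finset.prod_ne_zero_iff.mpr fun t _ => h t

lemma qPoch_succ (q : ℂ) (n : ℕ) :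
    qPoch q q (n + 1) = qPoch q q n * (1 - q ^ (n + 1)) := by
  rw [qPoch, prod_range_succ, ← qPoch]
  congr 1
  rw [pow_succ]
  ring

lemma choose2_succ (n : ℕ) : (n + 1).choose 2 = n.choose 2 + n := by
  rw [Nat.choose_succ_succ, Nat.choose_one_right, Nat.add_comm]

lemma choose2_add (t i : ℕ) : (t + i).choose 2 = t.choose 2 + t * i + i.choose 2 := by
  induction i with
  | zero => simp
  | succ i ih =>
    have h1 : t + (i + 1) = (t + i) + 1 := by omega
    rw [h1, choose2_succ, ih, choose2_succ]
    ring

lemma cancel_aux (x w N P Q B : ℂ) (hw : (1 : ℂ) - w ≠ 0) :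
    x * (1 - w) * (N / (P * (Q * (1 - w))) * B) = x * (N / (P * Q) * B) := by
  have hD : P * (Q * (1 - w)) = P * Q * (1 - w) := by ring
  rw [hD, ← div_div]
  calc x * (1 - w) * (N / (P * Q) / (1 - w) * B)
      = x * (N / (P * Q) / (1 - w) * (1 - w)) * B := by ring
    _ = x * (N / (P * Q)) * B := by rw [div_mul_cancel₀ _ hw]
    _ = x * (N / (P * Q) * B) := by ring

lemma cancel_aux2 (v N P Q B : ℂ) (hv : (1 : ℂ) - v ≠ 0) :
    (1 - v) * (N / (P * (1 - v) * Q) * B) = N / (P * Q) * B := by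
  have hD : P * (1 - v) * Q = P * Q * (1 - v) := by ring
  rw [hD, ← div_div]
  calc (1 - v) * (N / (P * Q) / (1 - v) * B)
      = N / (P * Q) / (1 - v) * (1 - v) * B := by ring
    _ = N / (P * Q) * B := by rw [div_mul_cancel₀ _ hv]

noncomputable def Tterm (q b c : ℂ) (m i : ℕ) : ℂ :=
  (∏ s ∈ range i, (1 + c * q ^ (s + 1))) * q ^ (i.choose 2) * b ^ i /
      (qPoch q q i * qPoch q q (m - i)) *
    ∏ s ∈ range (m - i), (1 - b * c * q ^ (i + 1 + s))

lemma step_term (q b c : ℂ) (hq1 : ∀ k : ℕ, (1 : ℂ) - q ^ (k + 1) ≠ 0)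
    (hP : ∀ n, qPoch q q n ≠ 0) (m k : ℕ) (hk : k ≤ m) :
    q ^ k * (1 - q ^ (m + 1 - k)) * Tterm q b c (m + 1) k
      + (1 - q ^ (k + 1)) * Tterm q b c (m + 1) (k + 1)
      = (1 + b) * Tterm q (b * q) c m k := by
  have h1 : m + 1 - k = (m - k) + 1 := by omega
  have h2 : m + 1 - (k + 1) = m - k := by omega
  rw [Tterm, Tterm, Tterm, h1, h2, qPoch_succ q (m - k), qPoch_succ q k,
    prod_range_succ' (fun s => (1 : ℂ) - b * c * q ^ (k + 1 + s)) (m - k),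
    prod_range_succ (fun s => (1 : ℂ) + c * q ^ (s + 1)) k, choose2_succ]
  have hB1 : (∏ s ∈ range (m - k), ((1 : ℂ) - b * c * q ^ (k + 1 + (s + 1))))
      = ∏ s ∈ range (m - k), (1 - b * q * c * q ^ (k + 1 + s)) :=
    prod_congr rfl fun s _ => by rw [pow_add, pow_add, pow_add]; ring
  have hB2 : (∏ s ∈ range (m - k), ((1 : ℂ) - b * c * q ^ (k + 1 + 1 + s)))
      = ∏ s ∈ range (m - k), (1 - b * q * c * q ^ (k + 1 + s)) :=
    prod_congr rfl fun s _ => by rw [pow_add, pow_add, pow_add]; ring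
  rw [hB1, hB2]
  rw [cancel_aux (q ^ k) (q ^ (m - k + 1)) _ _ _ _ (hq1 (m - k)),
    cancel_aux2 (q ^ (k + 1)) _ _ _ _ (hq1 k)]
  have e1 : qPoch q q k ≠ 0 := hP k
  have e2 : qPoch q q (m - k) ≠ 0 := hP (m - k)
  have e3 : (1 : ℂ) - q ^ (m - k + 1) ≠ 0 := hq1 (m - k)
  have e4 : (1 : ℂ) - q ^ (k + 1) ≠ 0 := hq1 k
  have e3' : (1 : ℂ) - q * q ^ (m - k) ≠ 0 := by
    have : q * q ^ (m - k) = q ^ (m - k + 1) := by rw [pow_succ]; ring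
    rw [this]; exact e3
  have e4' : (1 : ℂ) - q * q ^ k ≠ 0 := by
    have : q * q ^ k = q ^ (k + 1) := by rw [pow_succ]; ring
    rw [this]; exact e4
  field_simp [e1, e2]
  ring

lemma key_sum (q : ℂ) (hq1 : ∀ k : ℕ, (1 : ℂ) - q ^ (k + 1) ≠ 0) :
    ∀ (m : ℕ) (b c : ℂ),
      ∑ i ∈ range (m + 1), Tterm q b c m i
        = (∏ s ∈ range m, (1 + b * q ^ s)) / qPoch q q m := by
  have hP : ∀ n, qPoch q q n ≠ 0 := by
    intro n
    refine qPoch_ne_zero (fun t => ?_) n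
    have : q * q ^ t = q ^ (t + 1) := by rw [pow_succ]; ring
    rw [this]
    exact hq1 t
  intro m
  induction m with
  | zero => intro b c; simp [Tterm, qPoch]
  | succ m ih =>
    intro b c
    have hstep : (1 - q ^ (m + 1)) * (∑ i ∈ range (m + 1 + 1), Tterm q b c (m + 1) i)
        = (1 + b) * ∑ i ∈ range (m + 1), Tterm q (b * q) c m i := by
      rw [mul_sum]
      have hXY : ∀ i ∈ range (m + 1 + 1),
          (1 - q ^ (m + 1)) * Tterm q b c (m + 1) i
            = q ^ i * (1 - q ^ (m + 1 - i)) * Tterm q b c (m + 1) i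
              + (1 - q ^ i) * Tterm q b c (m + 1) i := by
        intro i hi
        have hi' : i ≤ m + 1 := by
          have := mem_range.mp hi; omega
        have hpow : q ^ i * q ^ (m + 1 - i) = q ^ (m + 1) := by
          rw [← pow_add]; congr 1; omega
        rw [← hpow]; ring
      rw [sum_congr rfl hXY, sum_add_distrib]
      rw [sum_range_succ (fun i => q ^ i * (1 - q ^ (m + 1 - i)) * Tterm q b c (m + 1) i)]
      rw [sum_range_succ' (fun i => (1 - q ^ i) * Tterm q b c (m + 1) i)]
      simp only [Nat.sub_self, pow_zero, sub_self, zero_mul, mul_zero, add_zero]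
      rw [← sum_add_distrib, mul_sum]
      refine sum_congr rfl fun k hk => ?_
      exact step_term q b c hq1 hP m k (by have := mem_range.mp hk; omega)
    rw [eq_div_iff (hP (m + 1)), qPoch_succ]
    calc (∑ i ∈ range (m + 1 + 1), Tterm q b c (m + 1) i) * (qPoch q q m * (1 - q ^ (m + 1)))
        = ((1 - q ^ (m + 1)) * ∑ i ∈ range (m + 1 + 1), Tterm q b c (m + 1) i) * qPoch q q m := by
          ring
      _ = ((1 + b) * ∑ i ∈ range (m + 1), Tterm q (b * q) c m i) * qPoch q q m := by
          rw [hstep]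
      _ = ((1 + b) * ((∏ s ∈ range m, (1 + b * q * q ^ s)) / qPoch q q m)) * qPoch q q m := by
          rw [ih (b * q) c]
      _ = (1 + b) * ∏ s ∈ range m, (1 + b * q * q ^ s) := by
          rw [mul_assoc, div_mul_cancel₀ _ (hP m)]
      _ = (∏ s ∈ range m, (1 + b * q ^ (s + 1))) * (1 + b * q ^ 0) := by
          rw [show (∏ s ∈ range m, ((1 : ℂ) + b * q * q ^ s))
              = ∏ s ∈ range m, (1 + b * q ^ (s + 1)) from
            prod_congr rfl fun s _ => by rw [pow_succ]; ring]
          ring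
      _ = ∏ s ∈ range (m + 1), (1 + b * q ^ s) :=
          (prod_range_succ' (fun s => (1 : ℂ) + b * q ^ s) m).symm

theorem forward_move_F2 (q a : ℂ) (hq0 : 0 < ‖q‖) (hq1 : ‖q‖ < 1)
    (ha : ∀ m : ℕ, 1 ≤ m → a * q ^ m ≠ 1)
    (ha' : ∀ m : ℕ, 1 + a * q ^ m ≠ 0)
    (α β : ℕ → ℂ) (h : IsBaileyPair q a α β) :
    IsBaileyPair q a
      (fun n => qPoch (-q) q n * q ^ (n.choose 2) * a ^ n / qPoch (-a) q n * α n)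
      (fun n => ∑ j ∈ Finset.range (n + 1),
        qPoch (-q) q j * q ^ (j.choose 2) * a ^ j /
          (qPoch q q (n - j) * qPoch (-a) q n) * β j) := by
  have hq1' : ∀ k : ℕ, (1 : ℂ) - q ^ (k + 1) ≠ 0 := by
    intro k hk
    rw [sub_eq_zero] at hk
    have h0 := congrArg norm hk.symm
    rw [norm_pow, norm_one] at h0
    have hlt : ‖q‖ ^ (k + 1) < 1 :=
      pow_lt_one₀ (norm_nonneg q) hq1 (Nat.succ_ne_zero k)
    rw [h0] at hlt
    exact lt_irrefl _ hlt
  have hPq : ∀ n, qPoch q q n ≠ 0 := by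
    intro n
    refine qPoch_ne_zero (fun t => ?_) n
    have : q * q ^ t = q ^ (t + 1) := by rw [pow_succ]; ring
    rw [this]; exact hq1' t
  have hPaq : ∀ n, qPoch (a * q) q n ≠ 0 := by
    intro n
    refine qPoch_ne_zero (fun t => ?_) n
    have : a * q * q ^ t = a * q ^ (t + 1) := by rw [pow_succ]; ring
    rw [this]
    exact sub_ne_zero_of_ne (Ne.symm (ha (t + 1) (by omega)))
  have hPma : ∀ n, qPoch (-a) q n ≠ 0 := by
    intro n
    refine qPoch_ne_zero (fun t => ?_) n
    have : (1 : ℂ) - -a * q ^ t = 1 + a * q ^ t := by ring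
    rw [this]; exact ha' t
  intro n
  dsimp only
  calc (∑ j ∈ Finset.range (n + 1),
        qPoch (-q) q j * q ^ (j.choose 2) * a ^ j /
          (qPoch q q (n - j) * qPoch (-a) q n) * β j)
      = ∑ j ∈ range (n + 1), ∑ t ∈ range (j + 1),
          qPoch (-q) q j * q ^ (j.choose 2) * a ^ j /
            (qPoch q q (n - j) * qPoch (-a) q n) *
            (α t / (qPoch q q (j - t) * qPoch (a * q) q (j + t))) := by
        refine sum_congr rfl fun j _ => ?_
        rw [h j, mul_sum]
    _ = ∑ t ∈ range (n + 1), ∑ j ∈ Ico t (n + 1),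
          qPoch (-q) q j * q ^ (j.choose 2) * a ^ j /
            (qPoch q q (n - j) * qPoch (-a) q n) *
            (α t / (qPoch q q (j - t) * qPoch (a * q) q (j + t))) := by
        simp only [range_eq_Ico]
        exact (sum_Ico_Ico_comm 0 (n + 1) fun t j =>
          qPoch (-q) q j * q ^ (j.choose 2) * a ^ j /
            (qPoch q q (n - j) * qPoch (-a) q n) *
            (α t / (qPoch q q (j - t) * qPoch (a * q) q (j + t)))).symm
    _ = ∑ t ∈ range (n + 1),
          qPoch (-q) q t * q ^ (t.choose 2) * a ^ t / qPoch (-a) q t * α t /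
            (qPoch q q (n - t) * qPoch (a * q) q (n + t)) := by
        refine sum_congr rfl fun t ht => ?_
        have htn : t ≤ n := by have := mem_range.mp ht; omega
        obtain ⟨m, rfl⟩ : ∃ m, n = t + m := ⟨n - t, by omega⟩
        rw [sum_Ico_eq_sum_range, show t + m + 1 - t = m + 1 from by omega]
        have hkey := key_sum q hq1' m (a * q ^ t) (q ^ t)
        have hterm : ∀ i ∈ range (m + 1),
            qPoch (-q) q (t + i) * q ^ ((t + i).choose 2) * a ^ (t + i) /
                (qPoch q q (t + m - (t + i)) * qPoch (-a) q (t + m)) *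
                (α t / (qPoch q q (t + i - t) * qPoch (a * q) q (t + i + t)))
              = qPoch (-q) q t * q ^ t.choose 2 * a ^ t * α t /
                  (qPoch (-a) q (t + m) * qPoch (a * q) q (t + m + t)) *
                  Tterm q (a * q ^ t) (q ^ t) m i := by
          intro i hi
          have him : i ≤ m := by have := mem_range.mp hi; omega
          have hC : qPoch (-q) q (t + i)
              = qPoch (-q) q t * ∏ s ∈ range i, (1 + q ^ t * q ^ (s + 1)) := by
            rw [qPoch, prod_range_add, ← qPoch]
            exact congrArg _ (prod_congr rfl fun s _ => by
              rw [pow_add, pow_add]; ring)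
          have hch : q ^ ((t + i).choose 2)
              = q ^ t.choose 2 * ((q ^ t) ^ i * q ^ (i.choose 2)) := by
            rw [choose2_add, pow_add, pow_add, pow_mul]; ring
          have hPaqspl : qPoch (a * q) q (t + m + t)
              = qPoch (a * q) q (t + i + t) *
                ∏ s ∈ range (m - i), (1 - a * q ^ t * q ^ t * q ^ (i + 1 + s)) := by
            rw [show t + m + t = (t + i + t) + (m - i) from by omega, qPoch,
              prod_range_add, ← qPoch]
            exact congrArg _ (prod_congr rfl fun s _ => by
              rw [pow_add, pow_add, pow_add, pow_add]; ring)
          have hBi : (∏ s ∈ range (m - i), ((1 : ℂ) - a * q ^ t * q ^ t * q ^ (i + 1 + s))) ≠ 0 := by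
            refine prod_ne_zero_iff.mpr fun s _ => ?_
            have he : a * q ^ t * q ^ t * q ^ (i + 1 + s) = a * q ^ (t + (t + (i + 1 + s))) := by
              rw [pow_add, pow_add]; ring
            rw [he]
            exact sub_ne_zero_of_ne (Ne.symm (ha (t + (t + (i + 1 + s))) (by omega)))
          rw [Tterm, show t + m - (t + i) = m - i from by omega,
            show t + i - t = i from by omega, hC, hch, pow_add a t i, hPaqspl]
          have e1 : qPoch q q i ≠ 0 := hPq i
          have e2 : qPoch q q (m - i) ≠ 0 := hPq (m - i)
          have e3 : qPoch (-a) q (t + m) ≠ 0 := hPma (t + m)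
          have e4 : qPoch (a * q) q (t + i + t) ≠ 0 := hPaq (t + i + t)
          generalize (∏ s ∈ range (m - i), ((1 : ℂ) - a * q ^ t * q ^ t * q ^ (i + 1 + s))) = B at hBi ⊢
          field_simp
          ring
        rw [sum_congr rfl hterm, ← mul_sum, hkey,
          show t + m - t = m from by omega]
        have hPmaspl : qPoch (-a) q (t + m)
            = qPoch (-a) q t * ∏ s ∈ range m, (1 + a * q ^ t * q ^ s) := by
          rw [qPoch, prod_range_add, ← qPoch]
          exact congrArg _ (prod_congr rfl fun s _ => by rw [pow_add]; ring)
        have hprodne : (∏ s ∈ range m, ((1 : ℂ) + a * q ^ t * q ^ s)) ≠ 0 := by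
          refine prod_ne_zero_iff.mpr fun s _ => ?_
          have he : a * q ^ t * q ^ s = a * q ^ (t + s) := by rw [pow_add]; ring
          rw [he]
          exact ha' (t + s)
        rw [hPmaspl]
        have e5 : qPoch (-a) q t ≠ 0 := hPma t
        have e6 : qPoch q q m ≠ 0 := hPq m
        have e7 : qPoch (a * q) q (t + m + t) ≠ 0 := hPaq (t + m + t)
        field_simp
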